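/- arXiv:2210.15395 — 2 statements merged into one kernel-verified Lean document; each statement's English description precedes it below -/
import Mathlib

section
/- Let q be an RA* query of output arity m over a schema S, let D be a database over S with Null(D) = {⊥₁, …, ⊥ₙ}, let ā be an interval tuple of length m, let k ∈ ℕ, and let ∘ ∈ {<, =, >}. For r ∈ ℝⁿ let v_r be the valuation with v_r(⊥_i) = r_i. Then the set {r ∈ ℝⁿ : #(v_r(ā), q(v_r(D))) ∘ k} is a Borel-measurable subset of ℝⁿ. -/
open scoped Classical

noncomputable section

/-! ### Databases with marked nulls and the query language RA* -/

/-- An entry of an incomplete database: a real constant or a marked null `⊥ⱼ` (`Sum.inr j`). -/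
abbrev DBEntry := ℝ ⊕ ℕ

/-- A bag (multiset) of tuples of reals: a relation of a complete database. -/
abbrev Bag := Multiset (List ℝ)

/-- An incomplete database over a schema `S` (a type of relation symbols): each relation
symbol is assigned a finite bag of tuples whose entries are reals or nulls. -/
abbrev IDB (S : Type*) := S → Multiset (List DBEntry)

/-- Applying a valuation (an assignment of reals to the nulls) to an incomplete database,
entrywise, yields a complete database. -/
def applyVal {S : Type*} (v : ℕ → ℝ) (D : IDB S) : S → Bag :=
  fun R => (D R).map (fun t => t.map (Sum.elim id v))

/-- A rational function over variables `$0, $1, …`: a ratio of two multivariate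
polynomials with real coefficients (division by zero yields `0`, Lean's convention). -/
abbrev RatFn := MvPolynomial ℕ ℝ × MvPolynomial ℕ ℝ

/-- Evaluation of a rational function. -/
def evalRatFn (f : RatFn) (x : ℕ → ℝ) : ℝ :=
  MvPolynomial.eval x f.1 / MvPolynomial.eval x f.2

/-- The `i`-th attribute of a tuple (`0`-indexed; out-of-range positions default to `0`). -/
def attr (t : List ℝ) (i : ℕ) : ℝ := t.getD i 0

/-- Syntax of RA* queries over a schema `S`: base relations, projection, selections
`$i = $j` and `$i < $j`, product, union, difference, application of a rational function,
and grouping with summation. -/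
inductive RAQuery (S : Type*) where
  | base (R : S)
  | proj (idx : List ℕ) (q : RAQuery S)
  | selEq (i j : ℕ) (q : RAQuery S)
  | selLt (i j : ℕ) (q : RAQuery S)
  | prod (q₁ q₂ : RAQuery S)
  | union (q₁ q₂ : RAQuery S)
  | diff (q₁ q₂ : RAQuery S)
  | app (f : RatFn) (q : RAQuery S)
  | sumAgg (keys : List ℕ) (j : ℕ) (q : RAQuery S)

/-- Bag semantics of RA* queries on complete databases. -/
def RAQuery.eval {S : Type*} (D : S → Bag) : RAQuery S → Bag
  | base R => D R
  | proj idx q => (q.eval D).map (fun t => idx.map (attr t))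
  | selEq i j q => (q.eval D).filter (fun t => attr t i = attr t j)
  | selLt i j q => (q.eval D).filter (fun t => attr t i < attr t j)
  | prod q₁ q₂ => (q₁.eval D).bind (fun t₁ => (q₂.eval D).map (fun t₂ => t₁ ++ t₂))
  | union q₁ q₂ => q₁.eval D + q₂.eval D
  | diff q₁ q₂ => q₁.eval D - q₂.eval D
  | app f q => (q.eval D).map (fun t => t ++ [evalRatFn f (attr t)])
  | sumAgg keys j q =>
      let B := q.eval D
      if keys = [] ∧ B = 0 then {[0]}
      else ((B.map (fun t => keys.map (attr t))).dedup).map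
        (fun k => k ++
          [((B.filter (fun t => keys.map (attr t) = k)).map (fun t => attr t j)).sum])

/-! ### Interval tuples -/

/-- An entry of an interval tuple: an interval whose endpoints are rational functions over
the nulls or `±∞` (`none`), each endpoint being open or closed. -/
structure IntervalEntry where
  lo : Option RatFn          -- `none` means `-∞`
  hi : Option RatFn          -- `none` means `+∞`
  loClosed : Bool
  hiClosed : Bool

/-- Membership of a real `x` in the interval obtained from `a` by evaluating its endpoints
under the valuation `v`. -/
def IntervalEntry.memVal (a : IntervalEntry) (v : ℕ → ℝ) (x : ℝ) : Prop :=
  (match a.lo with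
    | none => True
    | some e => if a.loClosed then evalRatFn e v ≤ x else evalRatFn e v < x) ∧
  (match a.hi with
    | none => True
    | some e => if a.hiClosed then x ≤ evalRatFn e v else x < evalRatFn e v)

/-- A real tuple `t` is consistent with the interval tuple `a` instantiated by `v` if it has
the same length and each component lies in the corresponding interval. -/
def consistent (a : List IntervalEntry) (v : ℕ → ℝ) (t : List ℝ) : Prop :=
  t.length = a.length ∧ ∀ i : Fin a.length, (a.get i).memVal v (attr t i)

/-- `#(v(a), B)`: the number of tuples of the bag `B`, counted with multiplicity, that are
consistent with `v(a)`. -/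
def countConsistent (a : List IntervalEntry) (v : ℕ → ℝ) (B : Bag) : ℕ :=
  Multiset.card (B.filter (consistent a v))

/-- The valuation `v_r` sending the null `⊥ᵢ` to `r i` (and nulls beyond `n` to `0`). -/
def valOf {n : ℕ} (r : Fin n → ℝ) : ℕ → ℝ :=
  fun j => if h : j < n then r ⟨j, h⟩ else 0

/-- All nulls occurring in the database `D` are among `⊥₀, …, ⊥_{n-1}`. -/
def nullsBelow {S : Type*} (D : IDB S) (n : ℕ) : Prop :=
  ∀ R : S, ∀ t ∈ D R, ∀ j : ℕ, Sum.inr j ∈ t → j < n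

/-- All null variables of a rational function are among `⊥₀, …, ⊥_{n-1}`. -/
def RatFnVarsBelow (f : RatFn) (n : ℕ) : Prop :=
  (∀ j ∈ f.1.vars, j < n) ∧ (∀ j ∈ f.2.vars, j < n)

/-- All null variables of the endpoints of an interval entry are among `⊥₀, …, ⊥_{n-1}`. -/
def IntervalEntry.varsBelow (a : IntervalEntry) (n : ℕ) : Prop :=
  (∀ e ∈ a.lo, RatFnVarsBelow e n) ∧ (∀ e ∈ a.hi, RatFnVarsBelow e n)

/-! Aux -/
section Aux
variable {α : Type*} [MeasurableSpace α]

lemma attr_eq_getElem (t : List ℝ) (i : ℕ) (h : i < t.length) : attr t i = t[i] := by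
  simp [attr, List.getD_eq_getElem?_getD, List.getElem?_eq_getElem h]

lemma attr_of_le (t : List ℝ) (i : ℕ) (h : t.length ≤ i) : attr t i = 0 := by
  simp [attr, List.getD_eq_getElem?_getD, List.getElem?_eq_none h]

lemma meas_polyEval (p : MvPolynomial ℕ ℝ) {x : α → ℕ → ℝ}
    (hx : ∀ j, Measurable fun r => x r j) :
    Measurable fun r => MvPolynomial.eval (x r) p := by
  induction p using MvPolynomial.induction_on with
  | C a => simpa using measurable_const
  | add p q hp hq => simp only [map_add]; exact hp.add hq
  | mul_X p j hp => simp only [map_mul, MvPolynomial.eval_X]; exact hp.mul (hx j)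

lemma meas_ratFn (f : RatFn) {x : α → ℕ → ℝ}
    (hx : ∀ j, Measurable fun r => x r j) :
    Measurable fun r => evalRatFn f (x r) :=
  (meas_polyEval f.1 hx).div (meas_polyEval f.2 hx)

lemma meas_nat_op {f g : α → ℕ} (hf : Measurable f) (hg : Measurable g)
    (op : ℕ → ℕ → ℕ) : Measurable fun r => op (f r) (g r) := by
  apply measurable_to_countable'
  intro k
  have : (fun r => op (f r) (g r)) ⁻¹' {k}
      = ⋃ a : ℕ, (f ⁻¹' {a}) ∩ (g ⁻¹' {b : ℕ | op a b = k}) := by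
    ext r
    simp only [Set.mem_preimage, Set.mem_singleton_iff, Set.mem_iUnion, Set.mem_inter_iff,
      Set.mem_setOf_eq]
    constructor
    · intro h; exact ⟨f r, rfl, h⟩
    · rintro ⟨a, rfl, h⟩; exact h
  rw [this]
  exact MeasurableSet.iUnion fun a =>
    (hf (MeasurableSet.of_discrete)).inter (hg (MeasurableSet.of_discrete))

def GoodTup (L : ℕ) (f : α → List ℝ) : Prop :=
  (∀ r, (f r).length = L) ∧ ∀ i, Measurable fun r => attr (f r) i

lemma list_eq_iff_attr {t s : List ℝ} {L : ℕ} (ht : t.length = L) (hs : s.length = L) :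
    t = s ↔ ∀ i < L, attr t i = attr s i := by
  constructor
  · rintro rfl i _; rfl
  · intro h
    apply List.ext_getElem (by omega)
    intro i h1 h2
    have := h i (by omega)
    rwa [attr_eq_getElem _ _ h1, attr_eq_getElem _ _ h2] at this

lemma meas_tup_eq {f g : α → List ℝ} {Lf Lg : ℕ}
    (hf : GoodTup Lf f) (hg : GoodTup Lg g) :
    MeasurableSet {r | f r = g r} := by
  by_cases h : Lf = Lg
  · subst h
    have : {r | f r = g r} = ⋂ i ∈ Finset.range Lf, {r | attr (f r) i = attr (g r) i} := by
      ext r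
      simp only [Set.mem_setOf_eq, Set.mem_iInter, Finset.mem_range]
      exact list_eq_iff_attr (hf.1 r) (hg.1 r)
    rw [this]
    exact MeasurableSet.biInter (Set.to_countable _)
      (fun i _ => measurableSet_eq_fun (hf.2 i) (hg.2 i))
  · have : {r | f r = g r} = ∅ := by
      ext r; simp only [Set.mem_setOf_eq, Set.mem_empty_iff_false, iff_false]
      intro he; exact h ((hf.1 r).symm.trans (by rw [he, hg.1 r]))
    rw [this]; exact MeasurableSet.empty

lemma goodTup_append {f g : α → List ℝ} {Lf Lg : ℕ}
    (hf : GoodTup Lf f) (hg : GoodTup Lg g) :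
    GoodTup (Lf + Lg) (fun r => f r ++ g r) := by
  constructor
  · intro r; simp [hf.1 r, hg.1 r]
  · intro i
    by_cases h : i < Lf
    · have : (fun r => attr (f r ++ g r) i) = fun r => attr (f r) i := by
        funext r
        rw [attr_eq_getElem _ _ (by simp [hf.1 r, hg.1 r]; omega),
          attr_eq_getElem _ _ (by rw [hf.1 r]; exact h),
          List.getElem_append_left (by rw [hf.1 r]; exact h)]
      rw [this]; exact hf.2 i
    · by_cases h2 : i < Lf + Lg
      · have : (fun r => attr (f r ++ g r) i) = fun r => attr (g r) (i - Lf) := by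
          funext r
          rw [attr_eq_getElem _ _ (by simp [hf.1 r, hg.1 r]; omega),
            attr_eq_getElem _ _ (by rw [hg.1 r]; omega)]
          rw [List.getElem_append_right (by rw [hf.1 r]; omega)]
          simp [hf.1 r]
        rw [this]; exact hg.2 _
      · have : (fun r => attr (f r ++ g r) i) = fun _ => 0 := by
          funext r; exact attr_of_le _ _ (by simp [hf.1 r, hg.1 r]; omega)
        rw [this]; exact measurable_const

lemma goodTup_proj (idx : List ℕ) {f : α → List ℝ} {L : ℕ} (hf : GoodTup L f) :
    GoodTup idx.length (fun r => idx.map (attr (f r))) := by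
  constructor
  · intro r; simp
  · intro i
    by_cases h : i < idx.length
    · have : (fun r => attr (idx.map (attr (f r))) i) = fun r => attr (f r) idx[i] := by
        funext r
        rw [attr_eq_getElem _ _ (by simpa using h)]
        simp
      rw [this]; exact hf.2 _
    · have : (fun r => attr (idx.map (attr (f r))) i) = fun _ => 0 := by
        funext r; exact attr_of_le _ _ (by simpa using Nat.le_of_not_lt h)
      rw [this]; exact measurable_const

lemma goodTup_single {v : α → ℝ} (hv : Measurable v) : GoodTup 1 (fun r => [v r]) := by
  constructor
  · intro r; rfl
  · intro i
    match i with
    | 0 => simpa [attr] using hv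
    | (i+1) =>
      have : (fun r => attr [v r] (i+1)) = fun _ => 0 := by
        funext r; exact attr_of_le _ _ (by simp)
      rw [this]; exact measurable_const

end Aux
section BRep
variable {α : Type*} [MeasurableSpace α]

abbrev BRep (α : Type*) := List ((α → ℕ) × (α → List ℝ))

def BRep.ok (L : BRep α) : Prop :=
  ∀ p ∈ L, Measurable p.1 ∧ ∃ m, GoodTup m p.2

def BRep.val (L : BRep α) (r : α) : Bag :=
  (L.map (fun p => p.1 r • ({p.2 r} : Bag))).sum

def GoodBag (B : α → Bag) : Prop := ∃ L : BRep α, L.ok ∧ ∀ r, B r = L.val r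

lemma BRep.val_nil (r : α) : BRep.val ([] : BRep α) r = 0 := rfl

lemma BRep.val_cons (p : (α → ℕ) × (α → List ℝ)) (L : BRep α) (r : α) :
    BRep.val (p :: L) r = p.1 r • ({p.2 r} : Bag) + BRep.val L r := by
  simp [BRep.val]

lemma BRep.val_append (L₁ L₂ : BRep α) (r : α) :
    BRep.val (L₁ ++ L₂) r = L₁.val r + L₂.val r := by
  simp [BRep.val]

lemma mem_val {L : BRep α} {r : α} {x : List ℝ} :
    x ∈ L.val r ↔ ∃ p ∈ L, p.1 r ≠ 0 ∧ p.2 r = x := by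
  induction L with
  | nil => simp [BRep.val]
  | cons p L ih =>
    rw [BRep.val_cons]
    simp only [Multiset.mem_add, ih, Multiset.mem_nsmul, Multiset.mem_singleton,
      List.mem_cons]
    constructor
    · rintro (⟨h1, h2⟩ | ⟨q, hq, h⟩)
      · exact ⟨p, Or.inl rfl, h1, h2.symm⟩
      · exact ⟨q, Or.inr hq, h⟩
    · rintro ⟨q, (rfl | hq), h⟩
      · exact Or.inl ⟨h.1, h.2.symm⟩
      · exact Or.inr ⟨q, hq, h⟩

lemma count_val (L : BRep α) (r : α) (x : List ℝ) :
    Multiset.count x (L.val r)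
      = (L.map (fun p => if p.2 r = x then p.1 r else 0)).sum := by
  induction L with
  | nil => simp [BRep.val]
  | cons p L ih =>
    rw [BRep.val_cons, Multiset.count_add, ih]
    rcases eq_or_ne (p.2 r) x with h | h
    · simp [h, Multiset.count_nsmul, Multiset.count_singleton]
    · simp [h, Ne.symm h, Multiset.count_nsmul, Multiset.count_singleton]

lemma meas_list_sum {β : Type*} (l : List β) (F : β → α → ℕ)
    (hF : ∀ b ∈ l, Measurable (F b)) :
    Measurable fun r => (l.map (fun b => F b r)).sum := by
  induction l with
  | nil => simpa using measurable_const
  | cons b l ih =>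
    simp only [List.map_cons, List.sum_cons]
    exact meas_nat_op (hF b (by simp))
      (ih fun c hc => hF c (List.mem_cons_of_mem _ hc)) (· + ·)

lemma meas_count {L : BRep α} (hL : L.ok) {f : α → List ℝ} {Lf : ℕ}
    (hf : GoodTup Lf f) :
    Measurable fun r => Multiset.count (f r) (L.val r) := by
  have he : (fun r => Multiset.count (f r) (L.val r))
      = fun r => (L.map (fun p => if p.2 r = f r then p.1 r else 0)).sum := by
    funext r; exact count_val L r (f r)
  rw [he]
  refine meas_list_sum L _ (fun p hp => ?_)
  obtain ⟨hm, m, hgt⟩ := hL p hp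
  exact Measurable.ite (meas_tup_eq hgt hf) hm measurable_const

lemma filter_nsmul_singleton (p : List ℝ → Prop) [DecidablePred p] (m : ℕ) (t : List ℝ) :
    Multiset.filter p (m • ({t} : Bag)) = if p t then m • ({t} : Bag) else 0 := by
  induction m with
  | zero => simp
  | succ m ih =>
    rw [succ_nsmul, Multiset.filter_add, ih, Multiset.filter_singleton]
    split_ifs <;> simp [succ_nsmul]

lemma map_nsmul' {β γ : Type*} (f : β → γ) (m : ℕ) (s : Multiset β) :
    (m • s).map f = m • s.map f := by
  induction m with
  | zero => simp
  | succ m ih => simp [succ_nsmul, ih]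

lemma bind_nsmul {β γ : Type*} (m : ℕ) (s : Multiset β) (f : β → Multiset γ) :
    (m • s).bind f = m • s.bind f := by
  induction m with
  | zero => simp
  | succ m ih => simp [succ_nsmul, Multiset.add_bind, ih]

lemma sum_nsmul' (m : ℕ) (s : Multiset ℝ) : (m • s).sum = m • s.sum := by
  induction m with
  | zero => simp
  | succ m ih => simp [succ_nsmul, ih]; ring

lemma filter_val (Q : List ℝ → Prop) [DecidablePred Q] (L : BRep α) (r : α) :
    (L.val r).filter Q
      = (L.map (fun p => (if Q (p.2 r) then p.1 r else 0) • ({p.2 r} : Bag))).sum := by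
  induction L with
  | nil => simp [BRep.val]
  | cons p L ih =>
    rw [BRep.val_cons, Multiset.filter_add, ih, filter_nsmul_singleton]
    split_ifs with h <;> simp [h]

lemma map_val (g : List ℝ → List ℝ) (L : BRep α) (r : α) :
    (L.val r).map g = (L.map (fun p => (p.1 r) • ({g (p.2 r)} : Bag))).sum := by
  induction L with
  | nil => simp [BRep.val]
  | cons p L ih =>
    rw [BRep.val_cons, Multiset.map_add, map_nsmul', ih]
    simp

end BRep
section Consistent
variable {α : Type*} [MeasurableSpace α]

lemma meas_memVal (e : IntervalEntry) {v : α → ℕ → ℝ}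
    (hv : ∀ j, Measurable fun r => v r j) {x : α → ℝ} (hx : Measurable x) :
    MeasurableSet {r | e.memVal (v r) (x r)} := by
  obtain ⟨lo, hi, lc, hc⟩ := e
  simp only [IntervalEntry.memVal]
  cases lo <;> cases hi <;> cases lc <;> cases hc <;>
  · rw [Set.setOf_and]
    apply MeasurableSet.inter <;>
      first
        | simpa using MeasurableSet.univ
        | simpa using measurableSet_le (meas_ratFn _ hv) hx
        | simpa using measurableSet_lt (meas_ratFn _ hv) hx
        | simpa using measurableSet_le hx (meas_ratFn _ hv)
        | simpa using measurableSet_lt hx (meas_ratFn _ hv)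

lemma meas_consistent (a : List IntervalEntry) {v : α → ℕ → ℝ}
    (hv : ∀ j, Measurable fun r => v r j) {f : α → List ℝ} {L : ℕ}
    (hf : GoodTup L f) :
    MeasurableSet {r | consistent a (v r) (f r)} := by
  have hset : {r | consistent a (v r) (f r)} =
      {r | (f r).length = a.length} ∩
        ⋂ i : Fin a.length, {r | (a.get i).memVal (v r) (attr (f r) i)} := by
    ext r; simp [consistent, Set.mem_iInter]
  rw [hset]
  apply MeasurableSet.inter
  · by_cases h : L = a.length
    · have : {r | (f r).length = a.length} = Set.univ := by ext r; simp [hf.1 r, h]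
      rw [this]; exact MeasurableSet.univ
    · have : {r | (f r).length = a.length} = ∅ := by ext r; simp [hf.1 r, h]
      rw [this]; exact MeasurableSet.empty
  · exact MeasurableSet.iInter fun i => meas_memVal _ hv (hf.2 i)

lemma countConsistent_val (a : List IntervalEntry) (v : ℕ → ℝ) (L : BRep α) (r : α) :
    countConsistent a v (L.val r)
      = (L.map (fun p => if consistent a v (p.2 r) then p.1 r else 0)).sum := by
  induction L with
  | nil => simp [countConsistent, BRep.val]
  | cons p L ih =>
    unfold countConsistent at *
    rw [BRep.val_cons, Multiset.filter_add, Multiset.card_add, ih,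
      filter_nsmul_singleton]
    split_ifs with h <;> simp [h]

lemma meas_countConsistent {B : α → Bag} (hB : GoodBag B) (a : List IntervalEntry)
    {v : α → ℕ → ℝ} (hv : ∀ j, Measurable fun r => v r j) :
    Measurable fun r => countConsistent a (v r) (B r) := by
  obtain ⟨L, hok, hval⟩ := hB
  have he : (fun r => countConsistent a (v r) (B r))
      = fun r => (L.map (fun p => if consistent a (v r) (p.2 r) then p.1 r else 0)).sum := by
    funext r; rw [hval, countConsistent_val]
  rw [he]
  refine meas_list_sum L _ (fun p hp => ?_)
  obtain ⟨hm, m, hgt⟩ := hok p hp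
  exact Measurable.ite (meas_consistent a hv hgt) hm measurable_const

end Consistent

section Closure
variable {α : Type*} [MeasurableSpace α]

lemma meas_valOf {n : ℕ} (j : ℕ) : Measurable fun r : Fin n → ℝ => valOf r j := by
  rcases Nat.lt_or_ge j n with h | h
  · have : (fun r : Fin n → ℝ => valOf r j) = fun r => r ⟨j, h⟩ := by
      funext r; simp [valOf, h]
    rw [this]; exact measurable_pi_apply _
  · have : (fun r : Fin n → ℝ => valOf r j) = fun _ => 0 := by
      funext r; simp [valOf, Nat.not_lt.2 h]
    rw [this]; exact measurable_const

lemma coe_eq_sum_singletons {β : Type*} (l : List β) :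
    (↑l : Multiset β) = (l.map (fun x => ({x} : Multiset β))).sum := by
  induction l with
  | nil => rfl
  | cons x l ih => simpa using congrArg (fun s => x ::ₘ s) ih

lemma goodBag_base {S : Type*} (D : IDB S) (R : S) {n : ℕ} :
    GoodBag (fun r : Fin n → ℝ => applyVal (valOf r) D R) := by
  refine ⟨(D R).toList.map
      (fun t => (fun _ => 1, fun r => t.map (Sum.elim id (valOf r)))), ?_, ?_⟩
  · intro p hp
    obtain ⟨t, ht, rfl⟩ := List.mem_map.1 hp
    refine ⟨measurable_const, t.length, fun r => by simp, fun i => ?_⟩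
    by_cases h : i < t.length
    · have he : (fun r : Fin n → ℝ => attr (t.map (Sum.elim id (valOf r))) i)
          = fun r => Sum.elim id (valOf r) t[i] := by
        funext r
        rw [attr_eq_getElem _ _ (by simpa using h)]
        simp
      rw [he]
      cases ht2 : t[i] with
      | inl c => simp only [ht2, Sum.elim_inl]; exact measurable_const
      | inr j => simp only [ht2, Sum.elim_inr]; exact meas_valOf j
    · have he : (fun r : Fin n → ℝ => attr (t.map (Sum.elim id (valOf r))) i)
          = fun _ => 0 := by
        funext r; exact attr_of_le _ _ (by simpa using Nat.le_of_not_lt h)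
      rw [he]; exact measurable_const
  · intro r
    simp only [applyVal, BRep.val, List.map_map]
    conv_lhs => rw [← Multiset.coe_toList (D R)]
    rw [Multiset.map_coe, coe_eq_sum_singletons, List.map_map]
    congr 1

lemma goodBag_union {B₁ B₂ : α → Bag} (h₁ : GoodBag B₁) (h₂ : GoodBag B₂) :
    GoodBag (fun r => B₁ r + B₂ r) := by
  obtain ⟨L₁, hok₁, hv₁⟩ := h₁
  obtain ⟨L₂, hok₂, hv₂⟩ := h₂
  refine ⟨L₁ ++ L₂, fun p hp => ?_, fun r => ?_⟩
  · rcases List.mem_append.1 hp with h | h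
    exacts [hok₁ p h, hok₂ p h]
  · dsimp only
    rw [hv₁, hv₂, BRep.val_append]

lemma goodBag_filter {B : α → Bag} (hB : GoodBag B) (P : α → List ℝ → Prop)
    [inst : ∀ r, DecidablePred (P r)]
    (hP : ∀ (f : α → List ℝ) (L : ℕ), GoodTup L f → MeasurableSet {r | P r (f r)}) :
    GoodBag (fun r => (B r).filter (P r)) := by
  obtain ⟨L, hok, hval⟩ := hB
  refine ⟨L.map (fun p => (fun r => if P r (p.2 r) then p.1 r else 0, p.2)),
    fun p hp => ?_, fun r => ?_⟩
  · obtain ⟨q, hq, rfl⟩ := List.mem_map.1 hp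
    obtain ⟨hm, Lq, hgt⟩ := hok q hq
    exact ⟨Measurable.ite (hP _ _ hgt) hm measurable_const, Lq, hgt⟩
  · dsimp only
    rw [hval, filter_val, BRep.val, List.map_map]
    rfl

lemma goodBag_map {B : α → Bag} (hB : GoodBag B) (G : List ℝ → List ℝ)
    (hG : ∀ (f : α → List ℝ) (L : ℕ), GoodTup L f →
      ∃ L', GoodTup L' (fun r => G (f r))) :
    GoodBag (fun r => (B r).map G) := by
  obtain ⟨L, hok, hval⟩ := hB
  refine ⟨L.map (fun p => (p.1, fun r => G (p.2 r))), fun p hp => ?_, fun r => ?_⟩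
  · obtain ⟨q, hq, rfl⟩ := List.mem_map.1 hp
    obtain ⟨hm, Lq, hgt⟩ := hok q hq
    exact ⟨hm, hG _ _ hgt⟩
  · dsimp only
    rw [hval, map_val, BRep.val, List.map_map]
    rfl

lemma smul_map_val (L₂ : BRep α) (r : α) (p : (α → ℕ) × (α → List ℝ)) :
    p.1 r • ((L₂.val r).map (fun t₂ => p.2 r ++ t₂))
      = BRep.val (L₂.map (fun q =>
          (fun r' => p.1 r' * q.1 r', fun r' => p.2 r' ++ q.2 r'))) r := by
  induction L₂ with
  | nil => simp [BRep.val]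
  | cons q L₂ ih =>
    rw [BRep.val_cons, Multiset.map_add, smul_add, ih, List.map_cons, BRep.val_cons]
    congr 1
    rw [map_nsmul', Multiset.map_singleton, smul_smul]

lemma bind_val (L₁ L₂ : BRep α) (r : α) :
    (L₁.val r).bind (fun t₁ => (L₂.val r).map (fun t₂ => t₁ ++ t₂))
      = BRep.val (L₁.flatMap (fun p => L₂.map (fun q =>
          (fun r' => p.1 r' * q.1 r', fun r' => p.2 r' ++ q.2 r')))) r := by
  induction L₁ with
  | nil => simp [BRep.val]
  | cons p L₁ ih =>
    rw [BRep.val_cons, Multiset.add_bind, bind_nsmul, Multiset.singleton_bind, ih,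
      List.flatMap_cons, BRep.val_append, smul_map_val L₂ r p]

lemma goodBag_prod {B₁ B₂ : α → Bag} (h₁ : GoodBag B₁) (h₂ : GoodBag B₂) :
    GoodBag (fun r => (B₁ r).bind (fun t₁ => (B₂ r).map (fun t₂ => t₁ ++ t₂))) := by
  obtain ⟨L₁, hok₁, hv₁⟩ := h₁
  obtain ⟨L₂, hok₂, hv₂⟩ := h₂
  refine ⟨L₁.flatMap (fun p => L₂.map (fun q =>
      (fun r => p.1 r * q.1 r, fun r => p.2 r ++ q.2 r))), fun p hp => ?_, fun r => ?_⟩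
  · obtain ⟨p₁, hp₁, hp'⟩ := List.mem_flatMap.1 hp
    obtain ⟨p₂, hp₂, rfl⟩ := List.mem_map.1 hp'
    obtain ⟨hm₁, l₁, hg₁⟩ := hok₁ p₁ hp₁
    obtain ⟨hm₂, l₂, hg₂⟩ := hok₂ p₂ hp₂
    exact ⟨meas_nat_op hm₁ hm₂ (· * ·), l₁ + l₂, goodTup_append hg₁ hg₂⟩
  · dsimp only
    rw [hv₁, hv₂, bind_val]

end Closure
section DiffAgg
variable {α : Type*} [MeasurableSpace α]

def diffRep (L₂ : BRep α) : BRep α → BRep α → BRep α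
  | _, [] => []
  | P, p :: L =>
      (fun r => (Multiset.count (p.2 r) (BRep.val P r) + p.1 r)
          - max (Multiset.count (p.2 r) (BRep.val P r))
                (Multiset.count (p.2 r) (L₂.val r)),
        p.2) :: diffRep L₂ (P ++ [p]) L

lemma ok_append {L₁ L₂ : BRep α} (h₁ : L₁.ok) (h₂ : L₂.ok) : (L₁ ++ L₂).ok := by
  intro p hp
  rcases List.mem_append.1 hp with h | h
  exacts [h₁ p h, h₂ p h]

lemma diffRep_ok {L₂ : BRep α} (h₂ : L₂.ok) :
    ∀ {L P : BRep α}, P.ok → L.ok → (diffRep L₂ P L).ok := by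
  intro L
  induction L with
  | nil => intro P _ _ p hp; simp [diffRep] at hp
  | cons hd L ih =>
    intro P hP hL x hx
    rw [diffRep] at hx
    rcases List.mem_cons.1 hx with h | h
    · obtain ⟨hm, m, hg⟩ := hL hd (by simp)
      subst h
      exact ⟨meas_nat_op (meas_nat_op (meas_count hP hg) hm (· + ·))
        (meas_nat_op (meas_count hP hg) (meas_count h₂ hg) max) (· - ·), m, hg⟩
    · exact ih (ok_append hP (fun q' hq' => by
        simp at hq'; subst hq'; exact hL _ List.mem_cons_self))
        (fun q' hq' => hL q' (List.mem_cons_of_mem _ hq')) x h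

lemma diffRep_val (L₂ : BRep α) (L P : BRep α) (r : α) :
    (diffRep L₂ P L).val r
      = (P.val r + L.val r) - L₂.val r - (P.val r - L₂.val r) := by
  induction L generalizing P with
  | nil =>
    rw [diffRep]
    ext x
    simp only [BRep.val_nil, Multiset.count_zero, add_zero, Multiset.count_sub]
    omega
  | cons p L ih =>
    rw [diffRep, BRep.val_cons, ih (P ++ [p])]
    ext x
    simp only [BRep.val_append, BRep.val_cons, BRep.val_nil, Multiset.count_add,
      Multiset.count_sub, Multiset.count_nsmul, Multiset.count_singleton, add_zero]
    rcases eq_or_ne x (p.2 r) with h | h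
    · subst h
      simp only [if_pos rfl, if_true, eq_self_iff_true, mul_one]
      omega
    · simp only [if_neg h, mul_zero]
      omega

lemma goodBag_diff {B₁ B₂ : α → Bag} (h₁ : GoodBag B₁) (h₂ : GoodBag B₂) :
    GoodBag (fun r => B₁ r - B₂ r) := by
  obtain ⟨L₁, hok₁, hv₁⟩ := h₁
  obtain ⟨L₂, hok₂, hv₂⟩ := h₂
  refine ⟨diffRep L₂ [] L₁,
    diffRep_ok hok₂ (fun p hp => by simp at hp) hok₁, fun r => ?_⟩
  dsimp only
  rw [hv₁, hv₂, diffRep_val]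
  ext x
  simp only [BRep.val_nil, Multiset.count_sub, Multiset.count_add, Multiset.count_zero]
  omega

def aggRep (keys : List ℕ) (j : ℕ) (L₀ : BRep α) : BRep α → BRep α
  | [] => []
  | p :: L =>
      (fun r => if p.1 r ≠ 0 ∧ ∀ q ∈ L, q.1 r = 0 ∨
            keys.map (attr (q.2 r)) ≠ keys.map (attr (p.2 r)) then 1 else 0,
        fun r => keys.map (attr (p.2 r)) ++
          [(L₀.map (fun q => (q.1 r : ℝ) *
            (if keys.map (attr (q.2 r)) = keys.map (attr (p.2 r))
              then attr (q.2 r) j else 0))).sum])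
      :: aggRep keys j L₀ L

lemma groupSum_val (keys : List ℕ) (j : ℕ) (L₀ : BRep α) (r : α) (kv : List ℝ) :
    (((L₀.val r).filter (fun t => keys.map (attr t) = kv)).map
        (fun t => attr t j)).sum
      = (L₀.map (fun q => (q.1 r : ℝ) *
          (if keys.map (attr (q.2 r)) = kv then attr (q.2 r) j else 0))).sum := by
  induction L₀ with
  | nil => simp [BRep.val]
  | cons q L₀ ih =>
    rw [BRep.val_cons, Multiset.filter_add, Multiset.map_add, Multiset.sum_add,
      filter_nsmul_singleton, ih, List.map_cons, List.sum_cons]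
    congr 1
    split_ifs with h
    · rw [map_nsmul', Multiset.map_singleton, sum_nsmul', Multiset.sum_singleton,
        nsmul_eq_mul]
    · simp

lemma mem_map_key_val {keys : List ℕ} {L : BRep α} {r : α} {k : List ℝ} :
    k ∈ (L.val r).map (fun t => keys.map (attr t)) ↔
      ∃ q ∈ L, q.1 r ≠ 0 ∧ keys.map (attr (q.2 r)) = k := by
  simp only [Multiset.mem_map, mem_val]
  constructor
  · rintro ⟨t, ⟨q, hq, h0, rfl⟩, rfl⟩; exact ⟨q, hq, h0, rfl⟩
  · rintro ⟨q, hq, h0, rfl⟩; exact ⟨q.2 r, ⟨q, hq, h0, rfl⟩, rfl⟩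

lemma aggRep_val (keys : List ℕ) (j : ℕ) (L₀ : BRep α) (L : BRep α) (r : α) :
    ((BRep.val L r).map (fun t => keys.map (attr t))).dedup.map
      (fun k => k ++ [(((L₀.val r).filter (fun t => keys.map (attr t) = k)).map
        (fun t => attr t j)).sum])
    = (aggRep keys j L₀ L).val r := by
  induction L with
  | nil => simp [BRep.val, aggRep]
  | cons p L ih =>
    rw [BRep.val_cons, Multiset.map_add, map_nsmul', Multiset.map_singleton, aggRep,
      BRep.val_cons, ← ih]
    dsimp only
    by_cases h0 : p.1 r = 0
    · have hμ : (if p.1 r ≠ 0 ∧ ∀ q ∈ L, q.1 r = 0 ∨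
          keys.map (attr (q.2 r)) ≠ keys.map (attr (p.2 r)) then 1 else 0) = 0 := by
        simp [h0]
      rw [hμ, zero_nsmul, zero_add, h0, zero_nsmul, zero_add]
    · by_cases hmem : keys.map (attr (p.2 r)) ∈ (BRep.val L r).map (fun t => keys.map (attr t))
      · have hd : (p.1 r • ({keys.map (attr (p.2 r))} : Multiset (List ℝ))
            + (BRep.val L r).map (fun t => keys.map (attr t))).dedup
            = ((BRep.val L r).map (fun t => keys.map (attr t))).dedup := by
          rw [Multiset.dedup_ext]
          intro b
          simp only [Multiset.mem_add, Multiset.mem_nsmul, Multiset.mem_singleton]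
          constructor
          · rintro (⟨_, rfl⟩ | hb)
            · exact hmem
            · exact hb
          · exact Or.inr
        rw [hd]
        obtain ⟨q, hq, hq0, hkey⟩ := mem_map_key_val.1 hmem
        have hμ : (if p.1 r ≠ 0 ∧ ∀ q ∈ L, q.1 r = 0 ∨
            keys.map (attr (q.2 r)) ≠ keys.map (attr (p.2 r)) then 1 else 0) = 0 := by
          rw [if_neg]
          rintro ⟨-, hall⟩
          rcases hall q hq with h | h
          exacts [hq0 h, h hkey]
        rw [hμ, zero_nsmul, zero_add]
      · have hd : (p.1 r • ({keys.map (attr (p.2 r))} : Multiset (List ℝ))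
            + (BRep.val L r).map (fun t => keys.map (attr t))).dedup
            = keys.map (attr (p.2 r)) ::ₘ
                ((BRep.val L r).map (fun t => keys.map (attr t))).dedup := by
          have h1 : (p.1 r • ({keys.map (attr (p.2 r))} : Multiset (List ℝ))
              + (BRep.val L r).map (fun t => keys.map (attr t))).dedup
              = (keys.map (attr (p.2 r)) ::ₘ
                  (BRep.val L r).map (fun t => keys.map (attr t))).dedup := by
            rw [Multiset.dedup_ext]
            intro b
            simp [Multiset.mem_nsmul, h0]
          rw [h1, Multiset.dedup_cons_of_notMem hmem]
        rw [hd, Multiset.map_cons]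
        have hμ : (if p.1 r ≠ 0 ∧ ∀ q ∈ L, q.1 r = 0 ∨
            keys.map (attr (q.2 r)) ≠ keys.map (attr (p.2 r)) then 1 else 0) = 1 := by
          rw [if_pos]
          refine ⟨h0, fun q hq => ?_⟩
          by_cases hq0 : q.1 r = 0
          · exact Or.inl hq0
          · refine Or.inr (fun he => hmem ?_)
            exact mem_map_key_val.2 ⟨q, hq, hq0, he⟩
        rw [hμ, one_nsmul, Multiset.singleton_add,
          groupSum_val keys j L₀ r (keys.map (attr (p.2 r)))]

end DiffAgg
section SumAgg
variable {α : Type*} [MeasurableSpace α]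

lemma meas_list_sum_real {β : Type*} (l : List β) (F : β → α → ℝ)
    (hF : ∀ b ∈ l, Measurable (F b)) :
    Measurable fun r => (l.map (fun b => F b r)).sum := by
  induction l with
  | nil => simpa using measurable_const
  | cons b l ih =>
    simp only [List.map_cons, List.sum_cons]
    exact (hF b (by simp)).add (ih fun c hc => hF c (List.mem_cons_of_mem _ hc))

lemma goodTup_const (c : List ℝ) : GoodTup (α := α) c.length (fun _ => c) :=
  ⟨fun _ => rfl, fun _ => measurable_const⟩

lemma meas_groupSum {L₀ : BRep α} (hok : L₀.ok) (keys : List ℕ) (j : ℕ)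
    {g : α → List ℝ} {Lg : ℕ} (hg : GoodTup Lg g) :
    Measurable fun r => (L₀.map (fun q => (q.1 r : ℝ) *
      (if keys.map (attr (q.2 r)) = keys.map (attr (g r)) then attr (q.2 r) j else 0))).sum := by
  refine meas_list_sum_real L₀ _ (fun q hq => ?_)
  obtain ⟨hm, m, hgt⟩ := hok q hq
  refine Measurable.mul (Measurable.comp Measurable.of_discrete hm) ?_
  exact Measurable.ite (meas_tup_eq (goodTup_proj keys hgt) (goodTup_proj keys hg))
    (hgt.2 j) measurable_const

lemma aggRep_ok {L₀ : BRep α} (hok : L₀.ok) (keys : List ℕ) (j : ℕ) :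
    ∀ {L : BRep α}, L.ok → (aggRep keys j L₀ L).ok := by
  intro L
  induction L with
  | nil => intro _ x hx; simp [aggRep] at hx
  | cons hd L ih =>
    intro hL x hx
    rw [aggRep] at hx
    obtain ⟨hm, m, hg⟩ := hL hd (by simp)
    rcases List.mem_cons.1 hx with h | h
    · subst h
      constructor
      · have hset : MeasurableSet {r : α | hd.1 r ≠ 0 ∧ ∀ q ∈ L, q.1 r = 0 ∨
            keys.map (attr (q.2 r)) ≠ keys.map (attr (hd.2 r))} := by
          have he : {r : α | hd.1 r ≠ 0 ∧ ∀ q ∈ L, q.1 r = 0 ∨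
              keys.map (attr (q.2 r)) ≠ keys.map (attr (hd.2 r))}
              = {r | hd.1 r ≠ 0} ∩ ⋂ (q : (α → ℕ) × (α → List ℝ)) (_ : q ∈ L),
                  ({r | q.1 r = 0} ∪ {r | keys.map (attr (q.2 r)) = keys.map (attr (hd.2 r))}ᶜ) := by
            ext r
            simp only [Set.mem_setOf_eq, Set.mem_inter_iff, Set.mem_iInter, Set.mem_union,
              Set.mem_compl_iff, ne_eq]
          rw [he]
          refine MeasurableSet.inter
            (hm (MeasurableSet.of_discrete : MeasurableSet {x : ℕ | x ≠ 0})) ?_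
          refine MeasurableSet.biInter (List.finite_toSet L).countable (fun q hq => ?_)
          obtain ⟨hmq, mq, hgq⟩ := hL q (List.mem_cons_of_mem _ hq)
          exact (hmq (MeasurableSet.of_discrete : MeasurableSet {x : ℕ | x = 0})).union
            (meas_tup_eq (goodTup_proj keys hgq) (goodTup_proj keys hg)).compl
        exact Measurable.ite hset measurable_const measurable_const
      · exact ⟨keys.length + 1,
          goodTup_append (goodTup_proj keys hg)
            (goodTup_single (meas_groupSum hok keys j hg))⟩
    · exact ih (fun q hq => hL q (List.mem_cons_of_mem _ hq)) x h

lemma val_eq_zero_iff {L : BRep α} {r : α} :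
    BRep.val L r = 0 ↔ ∀ q ∈ L, q.1 r = 0 := by
  constructor
  · intro h q hq
    by_contra h0
    have : q.2 r ∈ BRep.val L r := mem_val.2 ⟨q, hq, h0, rfl⟩
    rw [h] at this
    exact absurd this (Multiset.notMem_zero _)
  · intro h
    induction L with
    | nil => rfl
    | cons p L ih =>
      rw [BRep.val_cons, h p (by simp), zero_nsmul, zero_add]
      exact ih (fun q hq => h q (List.mem_cons_of_mem _ hq))

lemma goodBag_sumAgg {B : α → Bag} (hB : GoodBag B) (keys : List ℕ) (j : ℕ) :
    GoodBag (fun r => if keys = [] ∧ B r = 0 then ({[0]} : Bag)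
      else ((B r).map (fun t => keys.map (attr t))).dedup.map
        (fun k => k ++ [(((B r).filter (fun t => keys.map (attr t) = k)).map
          (fun t => attr t j)).sum])) := by
  obtain ⟨L, hok, hval⟩ := hB
  by_cases hk : keys = []
  · subst hk
    refine ⟨[(fun _ => 1, fun r => [(L.map (fun q => (q.1 r : ℝ) * attr (q.2 r) j)).sum])],
      ?_, ?_⟩
    · intro p hp
      simp only [List.mem_singleton] at hp
      subst hp
      exact ⟨measurable_const, 1,
        goodTup_single (meas_list_sum_real L _ (fun q hq => by
          obtain ⟨hm, m, hg⟩ := hok q hq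
          exact (Measurable.comp Measurable.of_discrete hm).mul (hg.2 j)))⟩
    · intro r
      dsimp only
      rw [BRep.val_cons, BRep.val_nil, add_zero, one_nsmul]
      dsimp only
      by_cases hB0 : B r = 0
      · rw [if_pos ⟨rfl, hB0⟩]
        have hz : BRep.val L r = 0 := by rw [← hval]; exact hB0
        have h2 : (L.map (fun q => (q.1 r : ℝ) * attr (q.2 r) j)).sum = 0 := by
          apply List.sum_eq_zero
          intro x hx
          obtain ⟨q, hq, rfl⟩ := List.mem_map.1 hx
          rw [val_eq_zero_iff.1 hz q hq]
          simp
        rw [h2]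
      · rw [if_neg (fun h => hB0 h.2)]
        have hded : ((B r).map (fun t => ([] : List ℕ).map (attr t))).dedup
            = {([] : List ℝ)} := by
          have h1 : ((B r).map (fun t => ([] : List ℕ).map (attr t))).dedup
              = ({([] : List ℝ)} : Multiset (List ℝ)).dedup := by
            rw [Multiset.dedup_ext]
            intro b
            simp only [Multiset.mem_map, List.map_nil, Multiset.mem_singleton]
            constructor
            · rintro ⟨t, ht, rfl⟩; rfl
            · rintro rfl
              obtain ⟨t, ht⟩ := Multiset.exists_mem_of_ne_zero hB0
              exact ⟨t, ht, rfl⟩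
          rw [h1, Multiset.dedup_singleton]
        rw [hded, Multiset.map_singleton, List.nil_append, hval,
          groupSum_val ([] : List ℕ) j L r ([] : List ℝ)]
        simp
  · refine ⟨aggRep keys j L L, aggRep_ok hok keys j hok, fun r => ?_⟩
    dsimp only
    rw [if_neg (fun h => hk h.1), hval, ← aggRep_val]

end SumAgg
/-- **Theorem 4.2 / Claim C.3.** Let `q` be an RA* query, `D` a database whose
nulls are `⊥₀, …, ⊥_{n-1}`, `a` an interval tuple (over these nulls), `k ∈ ℕ` and
`∘ ∈ {<, =, >}`. For `r ∈ ℝⁿ` let `v_r` be the valuation with `v_r(⊥ᵢ) = rᵢ`. Then the set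
`{r ∈ ℝⁿ : #(v_r(a), q(v_r(D))) ∘ k}` is a Borel-measurable subset of `ℝⁿ`. -/
theorem target_set_borel_measurable
    {S : Type*} (q : RAQuery S) (D : IDB S) (n : ℕ) (hD : nullsBelow D n)
    (a : List IntervalEntry) (ha : ∀ e ∈ a, e.varsBelow n)
    (k : ℕ) (cmp : ℕ → ℕ → Prop)
    (hcmp : cmp = (· < ·) ∨ cmp = (· = ·) ∨ cmp = (· > ·)) :
    MeasurableSet {r : Fin n → ℝ |
      cmp (countConsistent a (valOf r) (q.eval (applyVal (valOf r) D))) k} := by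
  have hgood : GoodBag (fun r : Fin n → ℝ => RAQuery.eval (applyVal (valOf r) D) q) := by
    induction q with
    | base R => exact goodBag_base D R
    | proj idx q ih =>
      exact goodBag_map ih _ (fun f L hf => ⟨idx.length, goodTup_proj idx hf⟩)
    | selEq i j q ih =>
      exact goodBag_filter ih (fun _ t => attr t i = attr t j)
        (fun f L hf => measurableSet_eq_fun (hf.2 i) (hf.2 j))
    | selLt i j q ih =>
      exact goodBag_filter ih (fun _ t => attr t i < attr t j)
        (fun f L hf => measurableSet_lt (hf.2 i) (hf.2 j))
    | prod q₁ q₂ ih₁ ih₂ => exact goodBag_prod ih₁ ih₂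
    | union q₁ q₂ ih₁ ih₂ => exact goodBag_union ih₁ ih₂
    | diff q₁ q₂ ih₁ ih₂ => exact goodBag_diff ih₁ ih₂
    | app f q ih =>
      exact goodBag_map ih _ (fun g L hg => ⟨L + 1,
        goodTup_append hg (goodTup_single (meas_ratFn f (fun i => hg.2 i)))⟩)
    | sumAgg keys j q ih => exact goodBag_sumAgg ih keys j
  have hF := meas_countConsistent hgood a (fun j => meas_valOf j)
  exact hF (MeasurableSet.of_discrete (s := {m : ℕ | cmp m k}))

end
end

section
/- For every RA* query q over a schema S and every database D over S, there exists a finite b ∈ ℕ such that for every valuation v : Null(D) → ℝ, the active domain of q(v(D)) — the set of real numbers occurring as a component of some tuple of the bag q(v(D)) — has at most b elements. -/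
open scoped Classical

noncomputable section

/-- The active domain of a bag: the (finite) set of reals occurring as a component of
some tuple of the bag. -/
def adom (B : Bag) : Finset ℝ := B.toFinset.biUnion (fun t => t.toFinset)

/-- Key auxiliary lemma: the cardinality of the answer bag and the lengths of its tuples
are bounded uniformly in the valuation. -/
lemma exists_card_len_bounds {S : Type*} (q : RAQuery S) (D : IDB S) :
    ∃ n L : ℕ, ∀ v : ℕ → ℝ,
      Multiset.card (q.eval (applyVal v D)) ≤ n ∧
      ∀ t ∈ q.eval (applyVal v D), t.length ≤ L := by
  induction q with
  | base R =>
      refine ⟨Multiset.card (D R), ((D R).map List.length).sum, fun v => ⟨?_, ?_⟩⟩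
      · simp [RAQuery.eval, applyVal]
      · intro t ht
        simp only [RAQuery.eval, applyVal, Multiset.mem_map] at ht
        obtain ⟨s, hs, rfl⟩ := ht
        rw [List.length_map]
        exact Multiset.single_le_sum (fun _ _ => Nat.zero_le _) _
          (Multiset.mem_map_of_mem _ hs)
  | proj idx q ih =>
      obtain ⟨n, L, h⟩ := ih
      refine ⟨n, idx.length, fun v => ⟨?_, ?_⟩⟩
      · simpa [RAQuery.eval] using (h v).1
      · intro t ht
        simp only [RAQuery.eval, Multiset.mem_map] at ht
        obtain ⟨s, hs, rfl⟩ := ht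
        simp
  | selEq i j q ih =>
      obtain ⟨n, L, h⟩ := ih
      refine ⟨n, L, fun v => ⟨?_, ?_⟩⟩
      · exact le_trans (Multiset.card_le_card (Multiset.filter_le _ _)) (h v).1
      · intro t ht
        exact (h v).2 t (Multiset.mem_of_le (Multiset.filter_le _ _) ht)
  | selLt i j q ih =>
      obtain ⟨n, L, h⟩ := ih
      refine ⟨n, L, fun v => ⟨?_, ?_⟩⟩
      · exact le_trans (Multiset.card_le_card (Multiset.filter_le _ _)) (h v).1
      · intro t ht
        exact (h v).2 t (Multiset.mem_of_le (Multiset.filter_le _ _) ht)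
  | prod q₁ q₂ ih₁ ih₂ =>
      obtain ⟨n₁, L₁, h₁⟩ := ih₁
      obtain ⟨n₂, L₂, h₂⟩ := ih₂
      refine ⟨n₁ * n₂, L₁ + L₂, fun v => ⟨?_, ?_⟩⟩
      · simp only [RAQuery.eval, Multiset.card_bind]
        calc (Multiset.map (fun t₁ => Multiset.card
                ((q₂.eval (applyVal v D)).map (fun t₂ => t₁ ++ t₂)))
                (q₁.eval (applyVal v D))).sum
            ≤ Multiset.card (Multiset.map (fun t₁ => Multiset.card
                ((q₂.eval (applyVal v D)).map (fun t₂ => t₁ ++ t₂)))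
                (q₁.eval (applyVal v D))) • n₂ := by
              refine Multiset.sum_le_card_nsmul _ _ ?_
              intro x hx
              rw [Multiset.mem_map] at hx
              obtain ⟨t₁, _, rfl⟩ := hx
              simpa using (h₂ v).1
          _ ≤ n₁ * n₂ := by
              rw [Multiset.card_map, smul_eq_mul]
              exact Nat.mul_le_mul_right _ (h₁ v).1
      · intro t ht
        simp only [RAQuery.eval, Multiset.mem_bind, Multiset.mem_map] at ht
        obtain ⟨t₁, ht₁, t₂, ht₂, rfl⟩ := ht
        rw [List.length_append]
        exact add_le_add ((h₁ v).2 t₁ ht₁) ((h₂ v).2 t₂ ht₂)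
  | union q₁ q₂ ih₁ ih₂ =>
      obtain ⟨n₁, L₁, h₁⟩ := ih₁
      obtain ⟨n₂, L₂, h₂⟩ := ih₂
      refine ⟨n₁ + n₂, max L₁ L₂, fun v => ⟨?_, ?_⟩⟩
      · simp only [RAQuery.eval, Multiset.card_add]
        exact add_le_add (h₁ v).1 (h₂ v).1
      · intro t ht
        simp only [RAQuery.eval, Multiset.mem_add] at ht
        rcases ht with ht | ht
        · exact le_trans ((h₁ v).2 t ht) (le_max_left _ _)
        · exact le_trans ((h₂ v).2 t ht) (le_max_right _ _)
  | diff q₁ q₂ ih₁ ih₂ =>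
      obtain ⟨n₁, L₁, h₁⟩ := ih₁
      refine ⟨n₁, L₁, fun v => ⟨?_, ?_⟩⟩
      · exact le_trans (Multiset.card_le_card tsub_le_self) (h₁ v).1
      · intro t ht
        exact (h₁ v).2 t (Multiset.mem_of_le tsub_le_self ht)
  | app f q ih =>
      obtain ⟨n, L, h⟩ := ih
      refine ⟨n, L + 1, fun v => ⟨?_, ?_⟩⟩
      · simpa [RAQuery.eval] using (h v).1
      · intro t ht
        simp only [RAQuery.eval, Multiset.mem_map] at ht
        obtain ⟨s, hs, rfl⟩ := ht
        rw [List.length_append, List.length_singleton]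
        exact Nat.add_le_add_right ((h v).2 s hs) 1
  | sumAgg keys j q ih =>
      obtain ⟨n, L, h⟩ := ih
      refine ⟨max n 1, keys.length + 1, fun v => ?_⟩
      show Multiset.card (RAQuery.eval _ _) ≤ _ ∧ _
      simp only [RAQuery.eval]
      set B := q.eval (applyVal v D) with hB
      by_cases hc : keys = [] ∧ B = 0
      · rw [if_pos hc]
        refine ⟨by simp, ?_⟩
        intro t ht
        simp only [Multiset.mem_singleton] at ht
        subst ht
        simp
      · rw [if_neg hc]
        constructor
        · calc Multiset.card (((B.map (fun t => keys.map (attr t))).dedup).map _)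
              = Multiset.card ((B.map (fun t => keys.map (attr t))).dedup) :=
                Multiset.card_map _ _
            _ ≤ Multiset.card (B.map (fun t => keys.map (attr t))) :=
                Multiset.card_le_card (Multiset.dedup_le _)
            _ = Multiset.card B := Multiset.card_map _ _
            _ ≤ n := (h v).1
            _ ≤ max n 1 := le_max_left _ _
        · intro t ht
          rw [Multiset.mem_map] at ht
          obtain ⟨k, hk, rfl⟩ := ht
          rw [Multiset.mem_dedup, Multiset.mem_map] at hk
          obtain ⟨s, _, rfl⟩ := hk
          simp

/-- **Lemma C.5.** For every RA* query `q` over a schema `S` and every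
incomplete database `D` over `S`, there is a finite bound `b` such that for every
valuation `v` of the nulls, the active domain of `q(v(D))` has at most `b` elements. -/
theorem adom_of_answer_bounded {S : Type*} (q : RAQuery S) (D : IDB S) :
    ∃ b : ℕ, ∀ v : ℕ → ℝ, (adom (q.eval (applyVal v D))).card ≤ b := by
  obtain ⟨n, L, h⟩ := exists_card_len_bounds q D
  refine ⟨n * L, fun v => ?_⟩
  set B := q.eval (applyVal v D) with hB
  calc (adom B).card
      ≤ ∑ t ∈ B.toFinset, t.toFinset.card := Finset.card_biUnion_le
    _ ≤ B.toFinset.card • L := by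
        refine Finset.sum_le_card_nsmul _ _ _ ?_
        intro t ht
        rw [Multiset.mem_toFinset] at ht
        exact le_trans (List.toFinset_card_le t) ((h v).2 t ht)
    _ ≤ n * L := by
        rw [smul_eq_mul]
        exact Nat.mul_le_mul_right _ (le_trans (Multiset.toFinset_card_le B) (h v).1)

end
end
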